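/- Let F be a field of characteristic zero, f : F → ℂ a quadratic function, and a : F → ℂ an additive function such that f(x²) = a(x)⁴ for all x ∈ F. Then there exists a ring homomorphism φ : F → ℂ such that a(x) = a(1)·φ(x) and f(x) = a(1)⁴·φ(x)² for all x ∈ F. -/

import Mathlib

/-- Polarization: a symmetric 4-additive map (ℂ-valued) vanishing on the diagonal is zero. -/
lemma polar4 {M : Type*} [AddCommMonoid M] (S : M → M → M → M → ℂ)
    (h1 : ∀ x x' y z w, S (x + x') y z w = S x y z w + S x' y z w)
    (s12 : ∀ x y z w, S x y z w = S y x z w)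
    (s23 : ∀ x y z w, S x y z w = S x z y w)
    (s34 : ∀ x y z w, S x y z w = S x y w z)
    (hdiag : ∀ x, S x x x x = 0) :
    ∀ x y z w, S x y z w = 0 := by
  have h2 : ∀ x y y' z w, S x (y + y') z w = S x y z w + S x y' z w := by
    intro x y y' z w
    rw [s12 x (y + y'), h1, ← s12 x y, ← s12 x y']
  have h3 : ∀ x y z z' w, S x y (z + z') w = S x y z w + S x y z' w := by
    intro x y z z' w
    rw [s23 x y (z + z'), h2, ← s23 x y z, ← s23 x y z']
  have h4 : ∀ x y z w w', S x y z (w + w') = S x y z w + S x y z w' := by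
    intro x y z w w'
    rw [s34 x y z (w + w'), h3, ← s34 x y z w, ← s34 x y z w']
  have s13 : ∀ x y z w, S x y z w = S z y x w := by
    intro x y z w
    rw [s23 x y z w, s12 x z y w, s23 z x y w]
  have s14 : ∀ x y z w, S x y z w = S w y z x := by
    intro x y z w
    rw [s34 x y z w, s13 x y w z, s34 w y x z]
  have s24 : ∀ x y z w, S x y z w = S x w z y := by
    intro x y z w
    rw [s34 x y z w, s23 x y w z, s34 x w y z]
  have E : ∀ x y, 4 * S x x x y + 6 * S x x y y + 4 * S x y y y = 0 := by
    intro x y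
    have h0 := hdiag (x + y)
    simp only [h1, h2, h3, h4] at h0
    rw [hdiag x, hdiag y,
        s12 y x x y, s12 y x y x, s13 y y x x,
        s23 x y x y, s24 x y y x,
        s14 y x x x, s24 x y x x, s34 x x y x,
        s12 y x y y, s13 y y x y, s14 y y y x] at h0
    linear_combination h0
  have hc1 : ∀ x y, S x y y y = 0 := by
    intro x y
    have e1 := E x y
    have e2 := E x (y + y)
    have e3 := E x (y + y + y)
    simp only [h2, h3, h4] at e2 e3
    linear_combination (1/8)*e1 - (1/8)*e2 + (1/24)*e3
  have hc3 : ∀ x y, S x x x y = 0 := by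
    intro x y
    have e1 := E x y
    have e2 := E x (y + y)
    have e3 := E x (y + y + y)
    simp only [h2, h3, h4] at e2 e3
    linear_combination (3/4)*e1 - (3/8)*e2 + (1/12)*e3
  have hc2 : ∀ x y, S x x y y = 0 := by
    intro x y
    have e1 := E x y
    linear_combination (1/6)*e1 - (2/3)*(hc3 x y) - (2/3)*(hc1 x y)
  have hxz : ∀ x z y, S x z y y = 0 := by
    intro x z y
    have h := hc2 (x + z) y
    simp only [h1, h2] at h
    rw [s12 z x y y] at h
    linear_combination (1/2)*h - (1/2)*(hc2 x y) - (1/2)*(hc2 z y)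
  intro x y z w
  have h := hxz x y (z + w)
  simp only [h3, h4] at h
  rw [s34 x y w z] at h
  linear_combination (1/2)*h - (1/2)*(hxz x y z) - (1/2)*(hxz x y w)

theorem stmt14 (F : Type*) [Field F] [CharZero F] (F₂ : F → F → ℂ)
    (hsymm : ∀ x y : F, F₂ x y = F₂ y x)
    (haddB : ∀ x y z : F, F₂ (x + y) z = F₂ x z + F₂ y z)
    (f : F → ℂ) (hf : ∀ x, f x = F₂ x x)
    (a : F → ℂ) (hadd : ∀ x y : F, a (x + y) = a x + a y)
    (heq : ∀ x : F, f (x ^ 2) = a x ^ 4) :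
    ∃ φ : F → ℂ,
      (∀ x y : F, φ (x + y) = φ x + φ y) ∧ (∀ x y : F, φ (x * y) = φ x * φ y) ∧
      (∀ x : F, a x = a 1 * φ x) ∧ (∀ x : F, f x = a 1 ^ 4 * φ x ^ 2) := by
  have key : ∀ x y z w : F, F₂ (x*y) (z*w) + F₂ (x*z) (y*w) + F₂ (x*w) (y*z)
      = 3*(a x * a y * a z * a w) := by
    intro x y z w
    have hp := polar4
      (fun p q r s => F₂ (p*q) (r*s) + F₂ (p*r) (q*s) + F₂ (p*s) (q*r)
        - 3*(a p * a q * a r * a s))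
      (fun p p' q r s => by simp only [add_mul, haddB, hadd]; ring)
      (fun p q r s => by
        rw [mul_comm p q, hsymm (p*r) (q*s), hsymm (p*s) (q*r)]; ring)
      (fun p q r s => by rw [mul_comm q r]; ring)
      (fun p q r s => by rw [mul_comm r s]; ring)
      (fun p => by
        rw [show p*p = p^2 from (pow_two p).symm, ← hf, heq]; ring)
      x y z w
    have hp' : F₂ (x*y) (z*w) + F₂ (x*z) (y*w) + F₂ (x*w) (y*z)
        - 3*(a x * a y * a z * a w) = 0 := hp
    linear_combination hp'
  have h2' : ∀ x : F, F₂ x 1 = a x * a 1 ^ 3 := by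
    intro x
    have k := key x 1 1 1
    simp only [mul_one, one_mul] at k
    linear_combination k/3
  have h4' : ∀ u v : F, 2 * F₂ u v = 3 * a u * a v * a 1 ^ 2 - a (u * v) * a 1 ^ 3 := by
    intro u v
    have k := key u v 1 1
    simp only [mul_one, one_mul] at k
    linear_combination k - h2' (u*v)
  by_cases hA : a 1 = 0
  · have hB0 : ∀ u v : F, F₂ u v = 0 := by
      intro u v
      linear_combination (h4' u v)/2
        + ((3/2)*a u*a v*a 1 - (1/2)*a (u*v)*a 1^2) * hA
    have haz : ∀ x : F, a x = 0 := by
      intro x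
      have h := heq x
      rw [hf, hB0] at h
      exact (pow_eq_zero_iff (by norm_num : (4:ℕ) ≠ 0)).mp h.symm
    exact ⟨fun _ => 0, by simp, by simp, fun x => by simp [haz], fun x => by simp [hf, hB0]⟩
  · have D : ∀ x y z : F, a 1 * (a (x*y*z) * a 1 - a (x*y) * a z)
        = a x * (a (y*z) * a 1 - a y * a z) + a y * (a (x*z) * a 1 - a x * a z) := by
      intro x y z
      apply mul_left_cancel₀ hA
      have k := key x y z 1
      simp only [mul_one] at k
      have ha := h4' (x*y) z
      have hb := h4' (x*z) y
      have hc := h4' x (y*z)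
      rw [show x*z*y = x*y*z from by ring] at hb
      rw [show x*(y*z) = x*y*z from by ring] at hc
      linear_combination (1/3)*ha + (1/3)*hb + (1/3)*hc - (2/3)*k
    have A4 : ∀ x y z w : F, a (x*y*(z*w)) * a 1 ^ 3
        = a 1^2 * (a (x*y) * a (z*w) + a (x*z) * a (y*w) + a (x*w) * a (y*z))
          - 2*(a x * a y * a z * a w) := by
      intro x y z w
      have k := key x y z w
      have ha := h4' (x*y) (z*w)
      have hb := h4' (x*z) (y*w)
      have hc := h4' (x*w) (y*z)
      rw [show x*z*(y*w) = x*y*(z*w) from by ring] at hb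
      rw [show x*w*(y*z) = x*y*(z*w) from by ring] at hc
      linear_combination (1/3)*ha + (1/3)*hb + (1/3)*hc - (2/3)*k
    have P : ∀ x y z w : F,
        (a (x*z)*a 1 - a x*a z) * (a (y*w)*a 1 - a y*a w)
        + (a (x*w)*a 1 - a x*a w) * (a (y*z)*a 1 - a y*a z) = 0 := by
      intro x y z w
      have d1 := D x y (z*w)
      have d2 := D z w y
      have d3 := D z w x
      have a4 := A4 x y z w
      rw [show y*(z*w) = z*w*y from by ring, show x*(z*w) = z*w*x from by ring] at d1
      rw [mul_comm w y, mul_comm z y] at d2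
      rw [mul_comm w x, mul_comm z x] at d3
      linear_combination (a 1)*d1 + (a x)*d2 + (a y)*d3 - a4
    have hm : ∀ x y : F, a (x*y) * a 1 = a x * a y := by
      intro x y
      have p := P x x y y
      have ht : (a (x*y) * a 1 - a x * a y)^2 = 0 := by linear_combination p/2
      have h5 := sq_eq_zero_iff.mp ht
      linear_combination h5
    refine ⟨fun x => a x / a 1, ?_, ?_, ?_, ?_⟩
    · intro x y
      simp only
      rw [hadd]; ring
    · intro x y
      simp only
      field_simp
      linear_combination hm x y
    · intro x
      simp only
      field_simp
    · intro x
      simp only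
      have h := h4' x x
      have hmx := hm x x
      have hFx : F₂ x x = a x^2 * a 1^2 := by
        linear_combination h/2 - (a 1^2/2) * hmx
      rw [hf, hFx]
      field_simp
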